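/- Let H_N be the (2N+1)-dimensional complex Heisenberg Lie algebra (N ≥ 1) with basis x₁,…,x_{2N+1} and nonzero brackets [x_i, x_{N+i}] = x_{2N+1} = −[x_{N+i}, x_i] for 1 ≤ i ≤ N, all other brackets of basis vectors being zero. Then H_N is I-null: every invariant symmetric bilinear form B on H_N satisfies B([X,Y],Z) = 0 for all X,Y,Z ∈ H_N. -/

import Mathlib

/-- The `(2N+1)`-dimensional complex Heisenberg Lie algebra (`N ≥ 1`),
with basis `x₀, …, x_{2N}` and nonzero brackets `⁅x i, x (N+i)⁆ = x (2N) = -⁅x (N+i), x i⁆`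
for `0 ≤ i < N`, is `I`-null: every invariant symmetric bilinear form `B` satisfies
`B([X,Y],Z) = 0`. -/
theorem stmt13 (N : ℕ) (hN : 1 ≤ N) (H : Type*) [LieRing H] [LieAlgebra ℂ H]
    [FiniteDimensional ℂ H] (x : Module.Basis (Fin (2 * N + 1)) ℂ H)
    (hbr : ∀ i j : Fin (2 * N + 1), ⁅x i, x j⁆ =
      if i.1 < N ∧ j.1 = i.1 + N then x (Fin.last (2 * N))
      else if j.1 < N ∧ i.1 = j.1 + N then -x (Fin.last (2 * N))
      else 0) :
    ∀ B : H →ₗ[ℂ] H →ₗ[ℂ] ℂ, (∀ X Y : H, B X Y = B Y X) →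
      (∀ X Y Z : H, B ⁅Z, X⁆ Y = - B X ⁅Z, Y⁆) →
      ∀ X Y Z : H, B ⁅X, Y⁆ Z = 0 := by
  intro B hsymm hinv X Y Z
  have hN0 : (0 : ℕ) < N := hN
  have h0N : (0 : ℕ) < 2 * N + 1 := by omega
  have hNlt : N < 2 * N + 1 := by omega
  set z : H := x (Fin.last (2 * N)) with hz
  -- z is a bracket
  have hzbr : ⁅x ⟨0, h0N⟩, x ⟨N, hNlt⟩⁆ = z := by
    rw [hbr, if_pos]
    exact ⟨hN0, (zero_add N).symm⟩
  -- B z vanishes on the basis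
  have hbasis : ∀ k : Fin (2 * N + 1), B z (x k) = 0 := by
    intro k
    have h1 : B ⁅x ⟨0, h0N⟩, x ⟨N, hNlt⟩⁆ (x k)
        = - B (x ⟨N, hNlt⟩) ⁅x ⟨0, h0N⟩, x k⁆ := hinv _ _ _
    by_cases hk : (k : ℕ) = N
    · have hkN : k = ⟨N, hNlt⟩ := Fin.ext hk
      have hbk : ⁅x ⟨0, h0N⟩, x k⁆ = z := by
        rw [hbr, if_pos]
        exact ⟨hN0, by simpa using hk⟩
      rw [hzbr] at h1
      rw [hbk] at h1
      rw [hkN] at h1 ⊢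
      have h2 : B (x ⟨N, hNlt⟩) z = B z (x ⟨N, hNlt⟩) := hsymm _ _
      rw [h2] at h1
      linear_combination h1 / 2
    · have hbk : ⁅x ⟨0, h0N⟩, x k⁆ = 0 := by
      -- both conditions fail
        rw [hbr, if_neg, if_neg]
        · simp only [not_and]
          intro hklt
          omega
        · simp only [not_and]
          intro _
          omega
      rw [hzbr, hbk] at h1
      simp at h1
      exact h1
  have key : ∀ w : H, B z w = 0 := by
    intro w
    have : B z = 0 := x.ext hbasis
    rw [this]
    rfl
  -- brackets of basis elements pair to zero with anything
  have hbb : ∀ i j : Fin (2 * N + 1), B ⁅x i, x j⁆ Z = 0 := by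
    intro i j
    rw [hbr i j]
    split_ifs with h1 h2
    · exact key Z
    · rw [map_neg]
      simp [key Z]
    · simp
  have sum_lie' : ∀ (s : Finset (Fin (2 * N + 1))) (f : Fin (2 * N + 1) → H) (w : H),
      ⁅∑ i ∈ s, f i, w⁆ = ∑ i ∈ s, ⁅f i, w⁆ := by
    intro s f w
    induction s using Finset.cons_induction with
    | empty => simp
    | cons a s ha ih => rw [Finset.sum_cons, Finset.sum_cons, add_lie, ih]
  have lie_sum' : ∀ (s : Finset (Fin (2 * N + 1))) (f : Fin (2 * N + 1) → H) (w : H),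
      ⁅w, ∑ i ∈ s, f i⁆ = ∑ i ∈ s, ⁅w, f i⁆ := by
    intro s f w
    induction s using Finset.cons_induction with
    | empty => simp
    | cons a s ha ih => rw [Finset.sum_cons, Finset.sum_cons, lie_add, ih]
  have hX := x.sum_repr X
  have hY := x.sum_repr Y
  calc B ⁅X, Y⁆ Z
      = B ⁅∑ i, x.repr X i • x i, ∑ j, x.repr Y j • x j⁆ Z := by rw [hX, hY]
    _ = 0 := by
        rw [sum_lie']
        rw [map_sum, LinearMap.sum_apply]
        apply Finset.sum_eq_zero
        intro i _
        rw [smul_lie, lie_sum']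
        simp only [map_smul, LinearMap.smul_apply, map_sum, LinearMap.sum_apply,
          lie_smul]
        rw [Finset.sum_eq_zero]
        · simp
        · intro j _
          simp [hbb i j]
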